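/- Let (E,z) be a gradient pair for H ∈ C¹(X,ℝ) on an open set X ⊆ ℝⁿ, let φ ∈ C¹(X̃,X) be a diffeomorphism and U : X̃ → ℝ^{n×n} continuous and pointwise invertible, and let (Ẽ, z̃) = (Uᵀ(E∘φ)Dφ, U^{-1}(z∘φ)) be the transformed gradient pair for H̃ = H∘φ. Let (Ē,z̄) be a discrete gradient pair for (H,E,z), let D̄φ be a discrete Jacobian for φ, and let Ū : X̃ × X̃ → ℝ^{n×n} be a consistent discretization of U that is invertible at every point. Then the pair (Ê, ẑ) defined by Ê(x̃,x̃') = Ū(x̃,x̃')ᵀ Ē(φ(x̃),φ(x̃')) D̄φ(x̃,x̃') and ẑ(x̃,x̃') = Ū(x̃,x̃')^{-1} z̄(φ(x̃),φ(x̃')) is a discrete gradient pair for (H̃, Ẽ, z̃). -/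

import Mathlib

open Matrix Set



section aux
variable {α : Type*} [TopologicalSpace α] {S : Set α} {n : ℕ}

lemma myContinuousOn_matrix_entry {m k : ℕ} {A : α → Matrix (Fin m) (Fin k) ℝ}
    (hA : ContinuousOn A S) (i : Fin m) (j : Fin k) :
    ContinuousOn (fun p => A p i j) S := by
  have : ContinuousOn ((fun M : Matrix (Fin m) (Fin k) ℝ => M i j) ∘ A) S :=
    ((continuous_apply j).comp (continuous_apply i)).comp_continuousOn hA
  exact this

lemma myContinuousOn_matrix_mul {A B : α → Matrix (Fin n) (Fin n) ℝ}
    (hA : ContinuousOn A S) (hB : ContinuousOn B S) :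
    ContinuousOn (fun p => A p * B p) S := by
  apply continuousOn_pi.mpr; intro i
  rw [continuousOn_pi]; intro j
  simp only [Matrix.mul_apply]
  exact continuousOn_finset_sum _ fun k _ =>
    (myContinuousOn_matrix_entry hA i k).mul (myContinuousOn_matrix_entry hB k j)

lemma myContinuousOn_matrix_transpose {A : α → Matrix (Fin n) (Fin n) ℝ}
    (hA : ContinuousOn A S) : ContinuousOn (fun p => (A p)ᵀ) S := by
  apply continuousOn_pi.mpr; intro i
  rw [continuousOn_pi]; intro j
  exact myContinuousOn_matrix_entry hA j i

lemma myContinuousOn_matrix_mulVec {A : α → Matrix (Fin n) (Fin n) ℝ}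
    {v : α → Fin n → ℝ} (hA : ContinuousOn A S) (hv : ContinuousOn v S) :
    ContinuousOn (fun p => (A p).mulVec (v p)) S := by
  rw [continuousOn_pi]; intro i
  simp only [Matrix.mulVec, dotProduct]
  exact continuousOn_finset_sum _ fun k _ =>
    (myContinuousOn_matrix_entry hA i k).mul ((continuous_apply k).comp_continuousOn hv)

lemma myContinuousOn_matrix_inv :
    ContinuousOn (fun M : Matrix (Fin n) (Fin n) ℝ => M⁻¹)
      {M : Matrix (Fin n) (Fin n) ℝ | M.det ≠ 0} := by
  have : ∀ M : Matrix (Fin n) (Fin n) ℝ, M⁻¹ = (M.det)⁻¹ • M.adjugate := by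
    intro M; rw [Matrix.inv_def, Ring.inverse_eq_inv']
  simp only [this]
  exact ((continuous_id.matrix_det).continuousOn.inv₀ fun M hM => hM).smul
    (continuous_id.matrix_adjugate).continuousOn

end aux

noncomputable def grad {n : ℕ} (f : (Fin n → ℝ) → ℝ) (x : Fin n → ℝ) : Fin n → ℝ :=
  fun i => fderiv ℝ f x (Pi.single i 1)

noncomputable def jac {n m : ℕ} (f : (Fin n → ℝ) → (Fin m → ℝ)) (x : Fin n → ℝ) :
    Matrix (Fin m) (Fin n) ℝ :=
  Matrix.of fun i j => fderiv ℝ f x (Pi.single j 1) i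

def IsDiscreteJacobian {n m : ℕ} (X : Set (Fin n → ℝ)) (F : (Fin n → ℝ) → (Fin m → ℝ))
    (DF : (Fin n → ℝ) → (Fin n → ℝ) → Matrix (Fin m) (Fin n) ℝ) : Prop :=
  ContinuousOn (fun p : (Fin n → ℝ) × (Fin n → ℝ) => DF p.1 p.2) (X ×ˢ X) ∧
  (∀ x ∈ X, ∀ x' ∈ X, (DF x x').mulVec (x' - x) = F x' - F x) ∧
  (∀ x ∈ X, DF x x = jac F x)

def IsDiscreteGradientPair {n : ℕ} (X : Set (Fin n → ℝ)) (H : (Fin n → ℝ) → ℝ)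
    (E : (Fin n → ℝ) → Matrix (Fin n) (Fin n) ℝ) (z : (Fin n → ℝ) → (Fin n → ℝ))
    (Ebar : (Fin n → ℝ) → (Fin n → ℝ) → Matrix (Fin n) (Fin n) ℝ)
    (zbar : (Fin n → ℝ) → (Fin n → ℝ) → (Fin n → ℝ)) : Prop :=
  ContinuousOn (fun p : (Fin n → ℝ) × (Fin n → ℝ) => Ebar p.1 p.2) (X ×ˢ X) ∧
  ContinuousOn (fun p : (Fin n → ℝ) × (Fin n → ℝ) => zbar p.1 p.2) (X ×ˢ X) ∧
  (∀ x ∈ X, ∀ x' ∈ X, zbar x x' ⬝ᵥ (Ebar x x').mulVec (x' - x) = H x' - H x) ∧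
  (∀ x ∈ X, Ebar x x = E x) ∧
  (∀ x ∈ X, zbar x x = z x)

/-- transformation of discrete gradient pairs under an invertible
system transformation `(φ, U)`, using a discrete Jacobian of `φ` and a
consistent pointwise invertible discretization of `U`. -/
theorem transformed_discrete_gradient_pair {n : ℕ}
    (X Xt : Set (Fin n → ℝ)) (hX : IsOpen X) (hXt : IsOpen Xt)
    (H : (Fin n → ℝ) → ℝ) (hH : ContDiffOn ℝ 1 H X)
    (E : (Fin n → ℝ) → Matrix (Fin n) (Fin n) ℝ) (z : (Fin n → ℝ) → (Fin n → ℝ))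
    (hEcont : ContinuousOn E X) (hzcont : ContinuousOn z X)
    (hgradpair : ∀ x ∈ X, (E x)ᵀ.mulVec (z x) = grad H x)
    (φ ψ : (Fin n → ℝ) → (Fin n → ℝ))
    (hφ : ContDiffOn ℝ 1 φ Xt) (hφmap : Set.MapsTo φ Xt X)
    (hψ : ContDiffOn ℝ 1 ψ X) (hψmap : Set.MapsTo ψ X Xt)
    (hψφ : ∀ xt ∈ Xt, ψ (φ xt) = xt) (hφψ : ∀ x ∈ X, φ (ψ x) = x)
    (U : (Fin n → ℝ) → Matrix (Fin n) (Fin n) ℝ)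
    (hUcont : ContinuousOn U Xt) (hUinv : ∀ xt ∈ Xt, IsUnit (U xt).det)
    -- a discrete gradient pair for (H, E, z)
    (Ebar : (Fin n → ℝ) → (Fin n → ℝ) → Matrix (Fin n) (Fin n) ℝ)
    (zbar : (Fin n → ℝ) → (Fin n → ℝ) → (Fin n → ℝ))
    (hpair : IsDiscreteGradientPair X H E z Ebar zbar)
    -- a discrete Jacobian for φ
    (Dφ : (Fin n → ℝ) → (Fin n → ℝ) → Matrix (Fin n) (Fin n) ℝ)
    (hDφ : IsDiscreteJacobian Xt φ Dφ)
    -- a consistent, pointwise invertible discretization of U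
    (Ub : (Fin n → ℝ) → (Fin n → ℝ) → Matrix (Fin n) (Fin n) ℝ)
    (hUbcont : ContinuousOn (fun p : (Fin n → ℝ) × (Fin n → ℝ) => Ub p.1 p.2) (Xt ×ˢ Xt))
    (hUbcons : ∀ xt ∈ Xt, Ub xt xt = U xt)
    (hUbinv : ∀ xt ∈ Xt, ∀ xt' ∈ Xt, IsUnit (Ub xt xt').det) :
    IsDiscreteGradientPair Xt (H ∘ φ)
      (fun xt => (U xt)ᵀ * E (φ xt) * jac φ xt)
      (fun xt => ((U xt)⁻¹).mulVec (z (φ xt)))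
      (fun xt xt' => (Ub xt xt')ᵀ * Ebar (φ xt) (φ xt') * Dφ xt xt')
      (fun xt xt' => ((Ub xt xt')⁻¹).mulVec (zbar (φ xt) (φ xt'))) := by
  
  obtain ⟨hEbc, hzbc, hid, hEd, hzd⟩ := hpair
  obtain ⟨hDc, hDid, hDd⟩ := hDφ
  have hφc : ContinuousOn φ Xt := hφ.continuousOn
  have hΦ : ContinuousOn (fun p : (Fin n → ℝ) × (Fin n → ℝ) => (φ p.1, φ p.2)) (Xt ×ˢ Xt) :=
    ContinuousOn.prodMk (hφc.comp continuousOn_fst fun p (hp : p ∈ Xt ×ˢ Xt) => hp.1)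
      (hφc.comp continuousOn_snd fun p (hp : p ∈ Xt ×ˢ Xt) => hp.2)
  have hΦmaps : Set.MapsTo (fun p : (Fin n → ℝ) × (Fin n → ℝ) => (φ p.1, φ p.2))
      (Xt ×ˢ Xt) (X ×ˢ X) := fun p hp => ⟨hφmap hp.1, hφmap hp.2⟩
  have hEbφ : ContinuousOn (fun p : (Fin n → ℝ) × (Fin n → ℝ) => Ebar (φ p.1) (φ p.2))
      (Xt ×ˢ Xt) := hEbc.comp hΦ hΦmaps
  have hzbφ : ContinuousOn (fun p : (Fin n → ℝ) × (Fin n → ℝ) => zbar (φ p.1) (φ p.2))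
      (Xt ×ˢ Xt) := hzbc.comp hΦ hΦmaps
  have hUbinvc : ContinuousOn (fun p : (Fin n → ℝ) × (Fin n → ℝ) => (Ub p.1 p.2)⁻¹)
      (Xt ×ˢ Xt) := by
    refine myContinuousOn_matrix_inv.comp hUbcont fun p hp => ?_
    exact isUnit_iff_ne_zero.mp (hUbinv _ hp.1 _ hp.2)
  refine ⟨?_, ?_, ?_, ?_, ?_⟩
  · exact myContinuousOn_matrix_mul
      (myContinuousOn_matrix_mul (myContinuousOn_matrix_transpose hUbcont) hEbφ) hDc
  · exact myContinuousOn_matrix_mulVec hUbinvc hzbφ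
  · intro x hx x' hx'
    have hUu := hUbinv x hx x' hx'
    calc ((Ub x x')⁻¹.mulVec (zbar (φ x) (φ x'))) ⬝ᵥ
          ((Ub x x')ᵀ * Ebar (φ x) (φ x') * Dφ x x').mulVec (x' - x)
        = ((Ub x x')⁻¹.mulVec (zbar (φ x) (φ x'))) ⬝ᵥ
          (Ub x x')ᵀ.mulVec ((Ebar (φ x) (φ x')).mulVec (φ x' - φ x)) := by
          rw [← hDid x hx x' hx', Matrix.mulVec_mulVec, Matrix.mulVec_mulVec,
            Matrix.mul_assoc]
      _ = ((Ub x x' * (Ub x x')⁻¹).mulVec (zbar (φ x) (φ x'))) ⬝ᵥ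
          (Ebar (φ x) (φ x')).mulVec (φ x' - φ x) := by
          rw [Matrix.dotProduct_mulVec, Matrix.vecMul_transpose, Matrix.mulVec_mulVec]
      _ = zbar (φ x) (φ x') ⬝ᵥ (Ebar (φ x) (φ x')).mulVec (φ x' - φ x) := by
          rw [Matrix.mul_nonsing_inv _ hUu, Matrix.one_mulVec]
      _ = (H ∘ φ) x' - (H ∘ φ) x := hid (φ x) (hφmap hx) (φ x') (hφmap hx')
  · intro x hx
    simp only [hUbcons x hx, hEd (φ x) (hφmap hx), hDd x hx]
  · intro x hx
    simp only [hUbcons x hx, hzd (φ x) (hφmap hx)]
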